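/- Let T ∈ M_n(ℂ) have n distinct eigenvalues λ_1,…,λ_n with corresponding unit eigenvectors x_1,…,x_n, and let y_1,…,y_n be unit eigenvectors of T* corresponding to conj(λ_1),…,conj(λ_n). Suppose T satisfies the Linear Strong Angle Test and that ⟨x_i, x_j⟩ ≠ 0 for all 1 ≤ i, j ≤ n. For each i set γ_i = ⟨y_1, y_i⟩ / ⟨x_1, x_i⟩. Then |γ_i| = 1 for each i, and the (unique) linear map R : ℂⁿ → ℂⁿ determined by R x_i = γ_i y_i for 1 ≤ i ≤ n is unitary. -/

import Mathlib

open Matrix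

/-- The standard Hermitian inner product on `ℂⁿ`, linear in the first slot. -/
noncomputable def hinner {n : ℕ} (x y : Fin n → ℂ) : ℂ := ∑ i, x i * (starRingEnd ℂ) (y i)

lemma hinner_conj {n : ℕ} (u v : Fin n → ℂ) :
    hinner v u = (starRingEnd ℂ) (hinner u v) := by
  simp [hinner, map_sum, mul_comm]

lemma hinner_smul_left {n : ℕ} (c : ℂ) (u v : Fin n → ℂ) :
    hinner (c • u) v = c * hinner u v := by
  simp [hinner, Finset.mul_sum, mul_assoc]

lemma hinner_smul_right {n : ℕ} (c : ℂ) (u v : Fin n → ℂ) :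
    hinner u (c • v) = (starRingEnd ℂ) c * hinner u v := by
  simp [hinner, Finset.mul_sum]; ring_nf; simp [mul_comm, mul_left_comm]

lemma hinner_mulVec {n : ℕ} (A : Matrix (Fin n) (Fin n) ℂ) (u v : Fin n → ℂ) :
    hinner (A.mulVec u) v = hinner u (Aᴴ.mulVec v) := by
  simp only [hinner, mulVec, dotProduct, conjTranspose_apply, map_sum, _root_.map_mul,
    Finset.sum_mul, Finset.mul_sum, RingHomCompTriple.comp_apply, Complex.conj_conj]
  rw [Finset.sum_comm]
  apply Finset.sum_congr rfl; intro i _; apply Finset.sum_congr rfl; intro j _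
  simp [mul_comm, mul_left_comm, mul_assoc]

lemma hinner_single {n : ℕ} (k : Fin n) (v : Fin n → ℂ) :
    hinner (Pi.single k 1) v = (starRingEnd ℂ) (v k) := by
  simp [hinner, Pi.single_apply, Finset.sum_ite_eq']

/-- The linear map `u ↦ hinner u w`. -/
noncomputable def hinnerMap {n : ℕ} (w : Fin n → ℂ) : (Fin n → ℂ) →ₗ[ℂ] ℂ where
  toFun u := hinner u w
  map_add' u v := by simp [hinner, add_mul, Finset.sum_add_distrib]
  map_smul' c u := by simpa using hinner_smul_left c u w

lemma triple_all {n : ℕ} {f g : Fin n → Fin n → ℂ}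
    (hf : ∀ a b, f b a = (starRingEnd ℂ) (f a b))
    (hg : ∀ a b, g b a = (starRingEnd ℂ) (g a b))
    (h : ∀ i j k : Fin n, i ≤ j → j ≤ k →
      f i j * f j k * f k i = g i j * g j k * g k i) :
    ∀ i j k : Fin n, f i j * f j k * f k i = g i j * g j k * g k i := by
  have h' : ∀ i j k : Fin n, i ≤ j → j ≤ k →
      f k j * f j i * f i k = g k j * g j i * g i k := by
    intro i j k hij hjk
    have H := congrArg (starRingEnd ℂ) (h i j k hij hjk)
    simp only [_root_.map_mul, ← hf, ← hg] at H
    linear_combination H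
  intro i j k
  rcases le_total i j with hij | hij <;> rcases le_total j k with hjk | hjk
  · linear_combination h i j k hij hjk
  · rcases le_total i k with hik | hik
    · linear_combination h' i k j hik hjk
    · linear_combination h k i j hik hij
  · rcases le_total i k with hik | hik
    · linear_combination h' j i k hij hik
    · linear_combination h j k i hjk hik
  · linear_combination h' k j i hjk hij

theorem gamma_unimodular_and_R_unitary (n : ℕ) (hn : 0 < n)
    (T : Matrix (Fin n) (Fin n) ℂ)
    (lam : Fin n → ℂ) (x y : Fin n → Fin n → ℂ)
    (hlam : Function.Injective lam)
    (hx : ∀ i, T.mulVec (x i) = lam i • x i)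
    (hxu : ∀ i, hinner (x i) (x i) = 1)
    (hy : ∀ i, Tᴴ.mulVec (y i) = (starRingEnd ℂ) (lam i) • y i)
    (hyu : ∀ i, hinner (y i) (y i) = 1)
    (hlsat : ∀ i j k : Fin n, i ≤ j → j ≤ k →
        hinner (x i) (x j) * hinner (x j) (x k) * hinner (x k) (x i)
          = hinner (y i) (y j) * hinner (y j) (y k) * hinner (y k) (y i))
    (hnz : ∀ i j : Fin n, hinner (x i) (x j) ≠ 0) :
    (∀ i : Fin n,
        ‖hinner (y ⟨0, hn⟩) (y i) / hinner (x ⟨0, hn⟩) (x i)‖ = 1) ∧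
    (∀ R : Matrix (Fin n) (Fin n) ℂ,
        (∀ i : Fin n,
          R.mulVec (x i)
            = (hinner (y ⟨0, hn⟩) (y i) / hinner (x ⟨0, hn⟩) (x i)) • y i) →
        R ∈ Matrix.unitaryGroup (Fin n) ℂ) := by
  set z : Fin n := ⟨0, hn⟩ with hz
  -- full LSAT
  have hall := triple_all (f := fun i j => hinner (x i) (x j))
    (g := fun i j => hinner (y i) (y j))
    (fun i j => by simpa using hinner_conj (x i) (x j))
    (fun i j => by simpa using hinner_conj (y i) (y j)) hlsat
  -- |a i| = |b i|
  have habs : ∀ i, ‖hinner (y z) (y i)‖ = ‖hinner (x z) (x i)‖ := by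
    intro i
    have H := hall z i i
    simp only [hxu, hyu, mul_one, one_mul] at H
    rw [hinner_conj (x z) (x i), hinner_conj (y z) (y i), Complex.mul_conj, Complex.mul_conj] at H
    have hns : Complex.normSq (hinner (x z) (x i)) = Complex.normSq (hinner (y z) (y i)) := by
      exact_mod_cast H
    rw [Complex.norm_def, Complex.norm_def, hns]
  have hbnz : ∀ i, hinner (y z) (y i) ≠ 0 := by
    intro i hbi
    apply hnz z i
    have h0 : ‖hinner (x z) (x i)‖ = 0 := by
      rw [← habs i, hbi, norm_zero]
    exact norm_eq_zero.mp h0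
  constructor
  · intro i
    rw [norm_div, habs i, div_self (norm_ne_zero_iff.mpr (hnz z i))]
  · intro R hR
    -- key identity
    have key : ∀ i j, (hinner (y z) (y i) / hinner (x z) (x i))
          * (starRingEnd ℂ) (hinner (y z) (y j) / hinner (x z) (x j)) * hinner (y i) (y j)
        = hinner (x i) (x j) := by
      intro i j
      have H := hall z i j
      rw [hinner_conj (x z) (x j), hinner_conj (y z) (y j)] at H
      have hca : ∀ k, (starRingEnd ℂ) (hinner (x z) (x k)) ≠ 0 := fun k => by
        simp [hnz z k]
      rw [map_div₀, div_mul_div_comm, div_mul_eq_mul_div,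
        div_eq_iff (mul_ne_zero (hnz z i) (hca j))]
      linear_combination -H
    -- x is a basis
    have hxne : ∀ i, x i ≠ 0 := by
      intro i hxi
      have := hxu i
      rw [hxi] at this
      simp [hinner] at this
    have hli : LinearIndependent ℂ x := by
      apply Module.End.eigenvectors_linearIndependent' (Matrix.mulVecLin T) lam hlam
      intro i
      constructor
      · rw [Module.End.mem_eigenspace_iff]
        simpa using hx i
      · exact hxne i
    haveI : Nonempty (Fin n) := ⟨z⟩
    let B : Module.Basis (Fin n) ℂ (Fin n → ℂ) :=
      basisOfLinearIndependentOfCardEqFinrank hli (by simp)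
    have hB : ∀ i, B i = x i := fun i => by
      rw [coe_basisOfLinearIndependentOfCardEqFinrank]
    -- nondegeneracy w.r.t. the basis
    have hdeg : ∀ w : Fin n → ℂ, (∀ i, hinner (x i) w = 0) → w = 0 := by
      intro w hw
      have hzero : hinnerMap w = 0 := by
        apply B.ext
        intro i
        rw [hB i]
        rw [LinearMap.zero_apply]; exact hw i
      funext k
      have := congrFun (congrArg (fun f => f.toFun) hzero) (Pi.single k 1)
      simp only [hinnerMap, LinearMap.coe_mk, AddHom.coe_mk] at this
      have h2 : (starRingEnd ℂ) (w k) = 0 := by rw [← hinner_single k w]; simpa using this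
      simpa using congrArg (starRingEnd ℂ) h2
    -- (Rᴴ * R) fixes each x j
    have hfix : ∀ j, (Rᴴ * R).mulVec (x j) = x j := by
      intro j
      have hdiff : ∀ i, hinner (x i) ((Rᴴ * R).mulVec (x j) - x j) = 0 := by
        intro i
        have h1 : hinner (x i) ((Rᴴ * R).mulVec (x j)) = hinner (x i) (x j) := by
          have h2 : hinner (R.mulVec (x i)) (R.mulVec (x j)) = hinner (x i) (x j) := by
            rw [hR i, hR j, hinner_smul_left, hinner_smul_right]
            rw [← mul_assoc]
            exact key i j
          calc hinner (x i) ((Rᴴ * R).mulVec (x j))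
              = hinner (x i) (Rᴴ.mulVec (R.mulVec (x j))) := by
                rw [← Matrix.mulVec_mulVec]
            _ = hinner (R.mulVec (x i)) (R.mulVec (x j)) := (hinner_mulVec R _ _).symm
            _ = hinner (x i) (x j) := h2
        have : hinner (x i) ((Rᴴ * R).mulVec (x j) - x j)
            = hinner (x i) ((Rᴴ * R).mulVec (x j)) - hinner (x i) (x j) := by
          simp [hinner, mul_sub, Finset.sum_sub_distrib]
        rw [this, h1, sub_self]
      have := hdeg _ hdiff
      exact sub_eq_zero.mp this
    -- conclude Rᴴ * R = 1
    have hmat : Rᴴ * R = 1 := by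
      apply Matrix.toLin'.injective
      apply B.ext
      intro i
      rw [hB i]
      simp only [Matrix.toLin'_apply]
      rw [hfix i]
      simp [Matrix.toLin'_apply]
    rw [Matrix.mem_unitaryGroup_iff']
    simpa [Matrix.star_eq_conjTranspose] using hmat
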